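/- arXiv:2401.04104 — 3 statements merged into one kernel-verified Lean document; each statement's English description precedes it below -/
import Mathlib

section
/- On the upper half-space ℂ^{n-1} × ℝ × [0,∞) (n ≥ 2), the function ρ_c((ξ,v,u),(ξ',v',u')) = | |ξ-ξ'|² + |u-u'| - i(v - v' + 2·Im⟨ξ,ξ'⟩) |^{1/2} (the modulus of a complex number, raised to the power 1/2) is a metric; its restriction to each horosphere {u = u₀} is independent of u₀ and coincides with the Korányi–Cygan metric on ℂ^{n-1} × ℝ; and for every (ξ₀,v₀) ∈ ℂ^{n-1} × ℝ the extended Carnot translation T_{(ξ₀,v₀)}(ξ,v,u) = (ξ₀+ξ, v₀+v+2·Im⟨ξ₀,ξ⟩, u) is an isometry of this metric. -/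
/-- The standard Hermitian product `⟨ξ,ξ'⟩ = ∑ i, ξ i * conj (ξ' i)` on `ℂ^d`. -/
noncomputable def herm {d : ℕ} (ξ ξ' : Fin d → ℂ) : ℂ :=
  ∑ i, ξ i * (starRingEnd ℂ) (ξ' i)

/-- The squared Hermitian norm `|ξ|² = ∑ i, |ξ i|²` on `ℂ^d`. -/
noncomputable def hnormSq {d : ℕ} (ξ : Fin d → ℂ) : ℝ :=
  ∑ i, Complex.normSq (ξ i)

/-- The Korányi–Cygan metric on the Heisenberg group `ℂ^d × ℝ`:
`ρ_c((ξ,v),(ξ',v')) = (|ξ-ξ'|⁴ + (v - v' + 2·Im⟨ξ,ξ'⟩)²)^{1/4}`. -/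
noncomputable def rhoC {d : ℕ} (p q : (Fin d → ℂ) × ℝ) : ℝ :=
  (hnormSq (p.1 - q.1) ^ 2 + (p.2 - q.2 + 2 * (herm p.1 q.1).im) ^ 2) ^ ((1 : ℝ) / 4)

/-- The extended Korányi–Cygan metric on the upper half-space `ℂ^d × ℝ × [0,∞)`
(points written `(ξ, (v, u))`):
`ρ_c((ξ,v,u),(ξ',v',u')) = | |ξ-ξ'|² + |u-u'| - i(v - v' + 2·Im⟨ξ,ξ'⟩) |^{1/2}`. -/
noncomputable def rhoU {d : ℕ} (p q : (Fin d → ℂ) × ℝ × ℝ) : ℝ :=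
  (‖(((hnormSq (p.1 - q.1) + |p.2.2 - q.2.2| : ℝ) : ℂ) -
      Complex.I * ((p.2.1 - q.2.1 + 2 * (herm p.1 q.1).im : ℝ) : ℂ))‖) ^ ((1 : ℝ) / 2)

/-- The extended Carnot translation of the upper half-space:
`T_{(ξ₀,v₀)}(ξ,v,u) = (ξ₀+ξ, v₀+v+2·Im⟨ξ₀,ξ⟩, u)`. -/
noncomputable def carnotT {d : ℕ} (ξ₀ : Fin d → ℂ) (v₀ : ℝ) (p : (Fin d → ℂ) × ℝ × ℝ) :
    (Fin d → ℂ) × ℝ × ℝ :=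
  (ξ₀ + p.1, (v₀ + p.2.1 + 2 * (herm ξ₀ p.1).im, p.2.2))

section CyganAux
open Complex Finset
lemma herm_conj {d : ℕ} (x y : Fin d → ℂ) : (starRingEnd ℂ) (herm x y) = herm y x := by
  simp [herm, map_sum, map_mul, mul_comm]
lemma herm_add_left {d : ℕ} (x y z : Fin d → ℂ) : herm (x + y) z = herm x z + herm y z := by
  simp [herm, add_mul, Finset.sum_add_distrib]
lemma herm_add_right {d : ℕ} (x y z : Fin d → ℂ) : herm x (y + z) = herm x y + herm x z := by
  simp [herm, mul_add, Finset.sum_add_distrib]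
lemma herm_sub_left {d : ℕ} (x y z : Fin d → ℂ) : herm (x - y) z = herm x z - herm y z := by
  simp [herm, sub_mul, Finset.sum_sub_distrib]
lemma herm_sub_right {d : ℕ} (x y z : Fin d → ℂ) : herm x (y - z) = herm x y - herm x z := by
  simp [herm, mul_sub, Finset.sum_sub_distrib]
lemma herm_self {d : ℕ} (x : Fin d → ℂ) : herm x x = ((hnormSq x : ℝ) : ℂ) := by
  simp [herm, hnormSq, Complex.mul_conj]
lemma herm_im_I {d : ℕ} (x y : Fin d → ℂ) :
    2 * (((herm x y).im : ℝ) : ℂ) * Complex.I = herm x y - herm y x := by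
  rw [← herm_conj x y]
  have := Complex.sub_conj (herm x y)
  rw [this]; push_cast; ring
lemma hnormSq_nonneg {d : ℕ} (x : Fin d → ℂ) : 0 ≤ hnormSq x :=
  Finset.sum_nonneg fun _ _ => Complex.normSq_nonneg _
lemma hnormSq_sub_comm {d : ℕ} (x y : Fin d → ℂ) : hnormSq (x - y) = hnormSq (y - x) := by
  simp only [hnormSq]
  exact Finset.sum_congr rfl fun i _ => by
    rw [Pi.sub_apply, Pi.sub_apply, ← Complex.normSq_neg, neg_sub]
lemma herm_cs {d : ℕ} (x y : Fin d → ℂ) :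
    ‖herm x y‖ ^ 2 ≤ hnormSq x * hnormSq y := by
  have h1 : ‖herm x y‖ ≤ ∑ i, ‖x i‖ * ‖y i‖ := by
    refine (norm_sum_le _ _).trans_eq ?_
    exact Finset.sum_congr rfl fun i _ => by rw [norm_mul, Complex.norm_conj]
  have h2 : (∑ i, ‖x i‖ * ‖y i‖) ^ 2
      ≤ (∑ i, ‖x i‖ ^ 2) * ∑ i, ‖y i‖ ^ 2 :=
    Finset.sum_mul_sq_le_sq_mul_sq _ _ _
  have h3 : ‖herm x y‖ ^ 2 ≤ (∑ i, ‖x i‖ * ‖y i‖) ^ 2 :=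
    pow_le_pow_left₀ (norm_nonneg _) h1 2
  simpa [hnormSq, Complex.sq_norm] using h3.trans h2
lemma hnormSq_eq_zero {d : ℕ} {x : Fin d → ℂ} (h : hnormSq x = 0) : x = 0 := by
  have := (Finset.sum_eq_zero_iff_of_nonneg (fun i _ => Complex.normSq_nonneg (x i))).1 h
  funext i
  exact Complex.normSq_eq_zero.1 (this i (Finset.mem_univ i))

noncomputable def cyg {d : ℕ} (p q : (Fin d → ℂ) × ℝ × ℝ) : ℂ :=
  ((hnormSq (p.1 - q.1) + |p.2.2 - q.2.2| : ℝ) : ℂ) -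
      Complex.I * ((p.2.1 - q.2.1 + 2 * (herm p.1 q.1).im : ℝ) : ℂ)

lemma rhoU_eq {d : ℕ} (p q : (Fin d → ℂ) × ℝ × ℝ) :
    rhoU p q = Real.sqrt (‖cyg p q‖) := by
  rw [rhoU, cyg, Real.sqrt_eq_rpow]
lemma hnormSq_sub_C {d : ℕ} (x y : Fin d → ℂ) :
    ((hnormSq (x - y) : ℝ) : ℂ) = herm x x + herm y y - herm x y - herm y x := by
  rw [← herm_self, herm_sub_left, herm_sub_right, herm_sub_right]; ring
lemma cyg_eq {d : ℕ} (p q : (Fin d → ℂ) × ℝ × ℝ) :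
    cyg p q = herm p.1 p.1 + herm q.1 q.1 - 2 * herm p.1 q.1
      + ((|p.2.2 - q.2.2| : ℝ) : ℂ) - Complex.I * ((p.2.1 - q.2.1 : ℝ) : ℂ) := by
  rw [cyg]; push_cast
  linear_combination hnormSq_sub_C p.1 q.1 - herm_im_I p.1 q.1
lemma cyg_re {d : ℕ} (p q : (Fin d → ℂ) × ℝ × ℝ) :
    (cyg p q).re = hnormSq (p.1 - q.1) + |p.2.2 - q.2.2| := by simp [cyg]
lemma cyg_im {d : ℕ} (p q : (Fin d → ℂ) × ℝ × ℝ) :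
    (cyg p q).im = -(p.2.1 - q.2.1 + 2 * (herm p.1 q.1).im) := by simp [cyg]
lemma cyg_conj {d : ℕ} (p q : (Fin d → ℂ) × ℝ × ℝ) :
    cyg q p = (starRingEnd ℂ) (cyg p q) := by
  rw [cyg_eq, cyg_eq]
  simp only [map_add, map_sub, map_mul, Complex.conj_ofReal, Complex.conj_I, herm_conj,
    map_ofNat]
  rw [abs_sub_comm q.2.2 p.2.2]
  push_cast; ring
lemma cyg_cocycle {d : ℕ} (p q r : (Fin d → ℂ) × ℝ × ℝ) :
    cyg p r = cyg p q + cyg q r - 2 * herm (p.1 - q.1) (r.1 - q.1) -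
      ((|p.2.2 - q.2.2| + |q.2.2 - r.2.2| - |p.2.2 - r.2.2| : ℝ) : ℂ) := by
  rw [cyg_eq, cyg_eq, cyg_eq, herm_sub_left, herm_sub_right, herm_sub_right]
  push_cast; ring
lemma cyg_carnot {d : ℕ} (ξ₀ : Fin d → ℂ) (v₀ : ℝ) (p q : (Fin d → ℂ) × ℝ × ℝ) :
    cyg (carnotT ξ₀ v₀ p) (carnotT ξ₀ v₀ q) = cyg p q := by
  rw [cyg_eq, cyg_eq]
  simp only [carnotT, herm_add_left, herm_add_right]
  push_cast
  linear_combination herm_im_I ξ₀ q.1 - herm_im_I ξ₀ p.1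

end CyganAux

/-- On the upper half-space `ℂ^{n-1} × ℝ × [0,∞)` (`n ≥ 2`), the function `ρ_c` above is a
metric; its restriction to each horosphere `{u = u₀}` is independent of `u₀` and coincides
with the Korányi–Cygan metric on `ℂ^{n-1} × ℝ`; and every extended Carnot translation is an
isometry of this metric. -/
theorem upper_half_space_cygan_metric (n : ℕ) (hn : 2 ≤ n) :
    (∀ p q : (Fin (n - 1) → ℂ) × ℝ × ℝ, 0 ≤ p.2.2 → 0 ≤ q.2.2 → (rhoU p q = 0 ↔ p = q)) ∧
    (∀ p q : (Fin (n - 1) → ℂ) × ℝ × ℝ, 0 ≤ p.2.2 → 0 ≤ q.2.2 → rhoU p q = rhoU q p) ∧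
    (∀ p q r : (Fin (n - 1) → ℂ) × ℝ × ℝ, 0 ≤ p.2.2 → 0 ≤ q.2.2 → 0 ≤ r.2.2 →
      rhoU p r ≤ rhoU p q + rhoU q r) ∧
    (∀ (ξ ξ' : Fin (n - 1) → ℂ) (v v' u₀ : ℝ), 0 ≤ u₀ →
      rhoU (ξ, (v, u₀)) (ξ', (v', u₀)) = rhoC (ξ, v) (ξ', v')) ∧
    (∀ (ξ₀ : Fin (n - 1) → ℂ) (v₀ : ℝ) (p q : (Fin (n - 1) → ℂ) × ℝ × ℝ),
      0 ≤ p.2.2 → 0 ≤ q.2.2 →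
      rhoU (carnotT ξ₀ v₀ p) (carnotT ξ₀ v₀ q) = rhoU p q) := by
  refine ⟨?_, ?_, ?_, ?_, ?_⟩
  · -- zero iff
    intro p q _ _
    rw [rhoU_eq, Real.sqrt_eq_zero (norm_nonneg _), norm_eq_zero]
    constructor
    · intro hz
      have hre := congrArg Complex.re hz
      have him := congrArg Complex.im hz
      rw [cyg_re] at hre
      rw [cyg_im] at him
      simp only [Complex.zero_re, Complex.zero_im] at hre him
      have h1 : hnormSq (p.1 - q.1) = 0 := by
        have := abs_nonneg (p.2.2 - q.2.2)
        have := hnormSq_nonneg (p.1 - q.1)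
        linarith
      have h2 : p.2.2 = q.2.2 := by
        have := hnormSq_nonneg (p.1 - q.1)
        have h2' : |p.2.2 - q.2.2| = 0 := by linarith
        have := abs_eq_zero.1 h2'
        linarith
      have hxi : p.1 = q.1 := sub_eq_zero.1 (hnormSq_eq_zero h1)
      have himz : (herm p.1 q.1).im = 0 := by rw [hxi, herm_self]; simp
      have hv : p.2.1 = q.2.1 := by rw [himz] at him; linarith
      exact Prod.ext hxi (Prod.ext hv h2)
    · rintro rfl
      rw [cyg_eq]
      have h0 : herm p.1 p.1 + herm p.1 p.1 - 2 * herm p.1 p.1 = 0 := by ring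
      simp [h0]
  · -- symmetry
    intro p q _ _
    rw [rhoU_eq, rhoU_eq, cyg_conj, Complex.norm_conj]
  · -- triangle
    intro p q r _ _ _
    rw [rhoU_eq, rhoU_eq, rhoU_eq]
    set α := ‖cyg p q‖ with hαdef
    set β := ‖cyg q r‖ with hβdef
    set γ := ‖cyg p r‖ with hγdef
    set X := hnormSq (p.1 - q.1) with hXdef
    set Y := hnormSq (q.1 - r.1) with hYdef
    set s := |p.2.2 - q.2.2| with hsdef
    set t := |q.2.2 - r.2.2| with htdef
    set c := ‖herm (p.1 - q.1) (r.1 - q.1)‖ with hcdef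
    set δ := s + t - |p.2.2 - r.2.2| with hδdef
    have hα0 : 0 ≤ α := norm_nonneg _
    have hβ0 : 0 ≤ β := norm_nonneg _
    have hX0 : 0 ≤ X := hnormSq_nonneg _
    have hY0 : 0 ≤ Y := hnormSq_nonneg _
    have hs0 : 0 ≤ s := abs_nonneg _
    have ht0 : 0 ≤ t := abs_nonneg _
    have hc0 : 0 ≤ c := norm_nonneg _
    have hδ0 : 0 ≤ δ := by
      have := abs_sub_le p.2.2 q.2.2 r.2.2
      simp only [hδdef]; linarith
    have hδm : δ ≤ 2 * min s t := by
      have h1 : |s - t| ≤ |p.2.2 - r.2.2| := by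
        have h2 := abs_abs_sub_abs_le_abs_sub (p.2.2 - q.2.2) (r.2.2 - q.2.2)
        have h3 : |r.2.2 - q.2.2| = t := abs_sub_comm r.2.2 q.2.2
        have h4 : p.2.2 - q.2.2 - (r.2.2 - q.2.2) = p.2.2 - r.2.2 := by ring
        rw [h4, h3] at h2
        exact h2
      rcases le_total s t with h | h
      · rw [min_eq_left h]
        rw [_root_.abs_of_nonpos (by linarith)] at h1
        simp only [hδdef]; linarith
      · rw [min_eq_right h]
        rw [_root_.abs_of_nonneg (by linarith)] at h1
        simp only [hδdef]; linarith
    have hγub : γ ≤ α + β + 2 * c + δ := by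
      have hmain : ‖cyg p r‖ ≤
          ‖cyg p q‖ + ‖cyg q r‖ +
            ‖2 * herm (p.1 - q.1) (r.1 - q.1)‖ + ‖((δ : ℝ) : ℂ)‖ := by
        rw [cyg_cocycle p q r]
        calc ‖cyg p q + cyg q r - 2 * herm (p.1 - q.1) (r.1 - q.1) - ((δ : ℝ) : ℂ)‖
            ≤ ‖cyg p q + cyg q r - 2 * herm (p.1 - q.1) (r.1 - q.1)‖ +
              ‖((δ : ℝ) : ℂ)‖ := norm_sub_le _ _
          _ ≤ (‖cyg p q + cyg q r‖ +
              ‖2 * herm (p.1 - q.1) (r.1 - q.1)‖) + ‖((δ : ℝ) : ℂ)‖ := by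
              gcongr
              exact norm_sub_le _ _
          _ ≤ _ := by
              gcongr
              exact norm_add_le _ _
      have habs2 : ‖2 * herm (p.1 - q.1) (r.1 - q.1)‖ = 2 * c := by
        rw [norm_mul]; simp [hcdef]
      have habsδ : ‖((δ : ℝ) : ℂ)‖ = δ := by
        rw [Complex.norm_real, Real.norm_eq_abs, _root_.abs_of_nonneg hδ0]
      rw [habs2, habsδ] at hmain
      exact hmain
    have hre1 : X + s ≤ α := by
      have := Complex.re_le_norm (cyg p q)
      rw [cyg_re] at this
      exact this
    have hre2 : Y + t ≤ β := by
      have := Complex.re_le_norm (cyg q r)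
      rw [cyg_re] at this
      exact this
    have hcs : c ^ 2 ≤ X * Y := by
      have := herm_cs (p.1 - q.1) (r.1 - q.1)
      rwa [hnormSq_sub_comm r.1 q.1] at this
    have h2c : 2 * c ≤ X + Y := by nlinarith [sq_nonneg (X - Y)]
    set m := min s t with hmdef
    have hm0 : 0 ≤ m := le_min hs0 ht0
    have hms : m ≤ s := min_le_left _ _
    have hmt : m ≤ t := min_le_right _ _
    have hsq : (c + m) ^ 2 ≤ (X + s) * (Y + t) := by nlinarith [mul_le_mul hms hmt hm0 hs0]
    have hsqrt : c + m ≤ Real.sqrt (α * β) := by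
      have h1 : c + m = Real.sqrt ((c + m) ^ 2) := (Real.sqrt_sq (by linarith)).symm
      rw [h1]
      apply Real.sqrt_le_sqrt
      calc (c + m) ^ 2 ≤ (X + s) * (Y + t) := hsq
        _ ≤ α * β := mul_le_mul hre1 hre2 (by linarith) hα0
    have hfin : γ ≤ (Real.sqrt α + Real.sqrt β) ^ 2 := by
      have hsq2 : (Real.sqrt α + Real.sqrt β) ^ 2 = α + β + 2 * Real.sqrt (α * β) := by
        rw [add_sq, Real.sq_sqrt hα0, Real.sq_sqrt hβ0, Real.sqrt_mul hα0]; ring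
      rw [hsq2]
      linarith
    calc Real.sqrt γ ≤ Real.sqrt ((Real.sqrt α + Real.sqrt β) ^ 2) := Real.sqrt_le_sqrt hfin
      _ = Real.sqrt α + Real.sqrt β := Real.sqrt_sq (by positivity)
  · -- horosphere
    intro ξ ξ' v v' u₀ _
    rw [rhoU, rhoC]
    simp only [sub_self, abs_zero, add_zero]
    set x := hnormSq ((ξ, (v, u₀)).1 - (ξ', (v', u₀)).1) with hx
    set y := ((ξ, (v, u₀)).2.1 - (ξ', (v', u₀)).2.1 + 2 * (herm ξ ξ').im) with hy
    have habs : ‖(x : ℂ) - Complex.I * (y : ℂ)‖ = Real.sqrt (x ^ 2 + y ^ 2) := by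
      rw [Complex.norm_def]
      congr 1
      simp [Complex.normSq_apply]
      ring
    rw [habs, Real.sqrt_eq_rpow, ← Real.rpow_mul (by positivity)]
    norm_num
  · -- Carnot isometry
    intro ξ₀ v₀ p q _ _
    rw [rhoU_eq, rhoU_eq, cyg_carnot]
end

section
/- For every integer m ≥ 2 and every real number c with 0 ≤ c < 1, there exists a compact, connected, nowhere dense subset K of the unit cube [0,1]^m ⊂ ℝ^m whose m-dimensional Lebesgue measure equals c. -/
open MeasureTheory Set

lemma exists_fat_cantor (c : ℝ) (hc0 : 0 ≤ c) (hc1 : c < 1) :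
    ∃ A : Set ℝ, A ⊆ Set.Icc 0 1 ∧ IsCompact A ∧ Dense Aᶜ ∧
      volume A = ENNReal.ofReal c := by
  -- dense open set U of measure < 1 - c
  obtain ⟨U, hQU, hUo, hUm⟩ := Set.exists_isOpen_lt_of_lt (Set.range ((↑) : ℚ → ℝ))
    (ENNReal.ofReal (1 - c))
    (by
      rw [(Set.countable_range _).measure_zero volume]
      simpa using sub_pos.mpr hc1)
  have hUd : Dense U := Rat.denseRange_cast.mono hQU
  set A0 : Set ℝ := Set.Icc 0 1 \ U with hA0
  have hA0c : IsCompact A0 := isCompact_Icc.diff hUo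
  have hA0m : MeasurableSet A0 := (isCompact_Icc.isClosed.sdiff hUo).measurableSet
  have hfin : ∀ t : ℝ, volume (A0 ∩ Set.Icc 0 t) ≠ ⊤ := by
    intro t
    exact ((measure_mono (Set.inter_subset_left.trans Set.diff_subset)).trans_lt
      (by simp [Real.volume_Icc])).ne
  set f : ℝ → ℝ := fun t => (volume (A0 ∩ Set.Icc 0 t)).toReal with hf
  have hmono : ∀ s t : ℝ, s ≤ t → f s ≤ f t := by
    intro s t hst
    exact ENNReal.toReal_mono (hfin t)
      (measure_mono (Set.inter_subset_inter_right _ (Set.Icc_subset_Icc_right hst)))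
  have hlip : LipschitzWith 1 f := by
    apply LipschitzWith.of_dist_le_mul
    intro s t
    wlog hst : t ≤ s generalizing s t
    · rw [dist_comm, dist_comm s t]; exact this t s (le_of_not_ge hst)
    rw [Real.dist_eq, Real.dist_eq, abs_of_nonneg (sub_nonneg.mpr (hmono t s hst)),
      abs_of_nonneg (sub_nonneg.mpr hst)]
    have hone : ((1:NNReal):ℝ) = 1 := rfl
    rw [hone, one_mul]
    have hsub : A0 ∩ Set.Icc 0 s ⊆ (A0 ∩ Set.Icc 0 t) ∪ Set.Ioc t s := by
      intro x hx
      rcases le_or_gt x t with h | h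
      · exact Or.inl ⟨hx.1, hx.2.1, h⟩
      · exact Or.inr ⟨h, hx.2.2⟩
    have hkey : volume (A0 ∩ Set.Icc 0 s) ≤ volume (A0 ∩ Set.Icc 0 t) + volume (Set.Ioc t s) :=
      (measure_mono hsub).trans (measure_union_le _ _)
    have h2 : volume (Set.Ioc t s) = ENNReal.ofReal (s - t) := Real.volume_Ioc
    rw [h2] at hkey
    have := ENNReal.toReal_mono
        (ENNReal.add_ne_top.mpr ⟨hfin t, ENNReal.ofReal_ne_top⟩) hkey
    rw [ENNReal.toReal_add (hfin t) ENNReal.ofReal_ne_top,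
      ENNReal.toReal_ofReal (sub_nonneg.mpr hst)] at this
    linarith
  have hf0 : f 0 = 0 := by
    have : A0 ∩ Set.Icc (0:ℝ) 0 ⊆ {0} := by
      intro x hx; simpa using hx.2
    have h0 : volume (A0 ∩ Set.Icc (0:ℝ) 0) = 0 :=
      le_antisymm ((measure_mono this).trans (by simp)) zero_le
    simp only [hf]
    rw [h0, ENNReal.toReal_zero]
  have hf1 : c ≤ f 1 := by
    have hA0sub : A0 ∩ Set.Icc 0 1 = A0 := by
      rw [Set.inter_eq_left]; exact Set.diff_subset
    have h1 : ENNReal.ofReal c ≤ volume A0 := by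
      have hd : volume (Set.Icc (0:ℝ) 1) - volume U ≤ volume A0 := le_measure_diff
      have : ENNReal.ofReal c ≤ volume (Set.Icc (0:ℝ) 1) - volume U := by
        rw [Real.volume_Icc]
        have : volume U ≤ ENNReal.ofReal (1 - c) := hUm.le
        calc ENNReal.ofReal c = ENNReal.ofReal (1 - 0) - ENNReal.ofReal (1 - c) := by
              rw [← ENNReal.ofReal_sub _ (by linarith)]; ring_nf
          _ ≤ ENNReal.ofReal (1 - 0) - volume U := by
              exact tsub_le_tsub_left hUm.le _
      exact this.trans hd
    have hA0fin : volume A0 ≠ ⊤ := hA0sub ▸ hfin 1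
    simp only [hf, hA0sub]
    rw [← ENNReal.toReal_ofReal hc0]
    exact ENNReal.toReal_mono hA0fin h1
  obtain ⟨t, ht, hft⟩ : ∃ t ∈ Set.Icc (0:ℝ) 1, f t = c :=
    intermediate_value_Icc zero_le_one hlip.continuous.continuousOn
      ⟨by rw [hf0]; exact hc0, hf1⟩
  refine ⟨A0 ∩ Set.Icc 0 t, (Set.inter_subset_left.trans Set.diff_subset), 
    hA0c.inter_right isClosed_Icc, ?_, ?_⟩
  · apply hUd.mono
    intro x hx
    simp only [Set.mem_compl_iff]
    intro hxA
    exact hxA.1.2 hx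
  · rw [← hft, hf, ENNReal.ofReal_toReal (hfin t)]

/-- For every integer `m ≥ 2` and every real `c` with `0 ≤ c < 1`, there exists a compact,
connected, nowhere dense subset `K` of the unit cube `[0,1]^m ⊂ ℝ^m` whose `m`-dimensional
Lebesgue measure equals `c` (a "fat" Sierpiński carpet). -/
theorem fat_sierpinski_carpet_exists (m : ℕ) (hm : 2 ≤ m) (c : ℝ) (hc0 : 0 ≤ c)
    (hc1 : c < 1) :
    ∃ K : Set (Fin m → ℝ),
      K ⊆ Set.Icc (0 : Fin m → ℝ) 1 ∧
      IsCompact K ∧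
      IsConnected K ∧
      IsNowhereDense K ∧
      volume K = ENNReal.ofReal c := by
  obtain ⟨k, rfl⟩ : ∃ k, m = k + 2 := ⟨m - 2, by omega⟩
  obtain ⟨A, hAsub, hAcpt, hAd, hAvol⟩ := exists_fat_cantor c hc0 hc1
  set I : Set ℝ := Set.Icc 0 1 with hI
  set K1 : Set (Fin (k + 2) → ℝ) :=
    Set.pi Set.univ (fun i => if i = 0 then A else I) with hK1
  set K2 : Set (Fin (k + 2) → ℝ) :=
    Set.pi Set.univ (fun i => if i = 1 then ({0} : Set ℝ) else I) with hK2
  have h10 : (1 : Fin (k + 2)) ≠ 0 := Fin.ne_of_val_ne (by simp)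
  refine ⟨K1 ∪ K2, ?_, ?_, ?_, ?_, ?_⟩
  · -- subset of unit cube
    rw [← Set.pi_univ_Icc]
    apply Set.union_subset <;>
      refine Set.pi_mono fun i _ => ?_ <;> split
    · exact hAsub
    · exact le_refl I
    · simp [Set.mem_Icc]
    · exact le_refl I
  · -- compact
    refine IsCompact.union (isCompact_univ_pi fun i => ?_)
      (isCompact_univ_pi fun i => ?_) <;> split
    · exact hAcpt
    · exact isCompact_Icc
    · exact isCompact_singleton
    · exact isCompact_Icc
  · -- connected
    set L : ℝ → Set (Fin (k + 2) → ℝ) :=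
      fun a => Set.pi Set.univ (fun i => if i = 0 then ({a} : Set ℝ) else I) with hL
    have hK2conv : Convex ℝ K2 := convex_pi fun i _ => by
      split
      · exact convex_singleton _
      · exact convex_Icc _ _
    have hLconv : ∀ a, Convex ℝ (L a) := fun a => convex_pi fun i _ => by
      split
      · exact convex_singleton _
      · exact convex_Icc _ _
    have hpK2 : (0 : Fin (k + 2) → ℝ) ∈ K2 := by
      intro i _
      dsimp only
      split
      · rfl
      · exact ⟨le_refl _, zero_le_one⟩
    have hxa : ∀ a ∈ A, (fun i => if i = 0 then a else 0) ∈ K2 ∩ L a := by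
      intro a ha
      constructor
      · intro i _
        rcases eq_or_ne i 1 with rfl | hi
        · simp [h10]
        · simp only [if_neg hi]
          split
          · exact hAsub ha
          · exact ⟨le_refl _, zero_le_one⟩
      · intro i _
        rcases eq_or_ne i 0 with rfl | hi
        · simp
        · simp only [if_neg hi]
          exact ⟨le_refl _, zero_le_one⟩
    have hunion : K1 ∪ K2 = ⋃₀ (insert K2 ((fun a => K2 ∪ L a) '' A)) := by
      ext x
      simp only [Set.mem_sUnion, Set.mem_insert_iff, Set.mem_image, Set.mem_union]
      constructor
      · rintro (hx | hx)
        · refine ⟨K2 ∪ L (x 0), Or.inr ⟨x 0, hx 0 (Set.mem_univ 0), rfl⟩, Or.inr ?_⟩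
          intro i _
          rcases eq_or_ne i 0 with rfl | hi
          · simp
          · have := hx i (Set.mem_univ i)
            simpa [hi] using this
        · exact ⟨K2, Or.inl rfl, hx⟩
      · rintro ⟨s, hs | ⟨a, ha, rfl⟩, hxs⟩
        · exact Or.inr (hs ▸ hxs)
        · rcases hxs with hx | hx
          · exact Or.inr hx
          · refine Or.inl fun i _ => ?_
            have hxi := hx i (Set.mem_univ i)
            dsimp only at hxi ⊢
            rcases eq_or_ne i 0 with rfl | hi
            · rw [if_pos rfl] at hxi ⊢
              rw [Set.mem_singleton_iff] at hxi
              rw [hxi]; exact ha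
            · simpa [hi] using hxi

    constructor
    · exact ⟨0, Or.inr hpK2⟩
    · rw [hunion]
      apply isPreconnected_sUnion (0 : Fin (k + 2) → ℝ)
      · rintro s (rfl | ⟨a, ha, rfl⟩)
        · exact hpK2
        · exact Or.inl hpK2
      · rintro s (rfl | ⟨a, ha, rfl⟩)
        · exact hK2conv.isPreconnected
        · exact IsPreconnected.union _ (hxa a ha).1 (hxa a ha).2
            hK2conv.isPreconnected (hLconv a).isPreconnected
  · -- nowhere dense
    have hcl : IsClosed (K1 ∪ K2) := by
      refine IsClosed.union (isClosed_set_pi fun i _ => ?_) (isClosed_set_pi fun i _ => ?_)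
      · split
        · exact hAcpt.isClosed
        · exact isClosed_Icc
      · split
        · exact isClosed_singleton
        · exact isClosed_Icc
    rw [hcl.isNowhereDense_iff, interior_eq_empty_iff_dense_compl]
    have hW : ((Function.eval (0 : Fin (k + 2)) ⁻¹' Aᶜ) ∩
        (Function.eval (1 : Fin (k + 2)) ⁻¹' ({0}ᶜ : Set ℝ))) ⊆ (K1 ∪ K2)ᶜ := by
      rintro x ⟨hx0, hx1⟩ (hx | hx)
      · have := hx 0 (Set.mem_univ 0)
        dsimp only at this
        rw [if_pos rfl] at this
        exact hx0 this
      · have := hx 1 (Set.mem_univ 1)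
        dsimp only at this
        rw [if_pos rfl] at this
        exact hx1 this
    refine Dense.mono hW ?_
    exact Dense.inter_of_isOpen_right (hAd.preimage (isOpenMap_eval 0))
      ((dense_compl_singleton (0 : ℝ)).preimage (isOpenMap_eval 1))
      (isOpen_compl_singleton.preimage (continuous_apply 1))
  · -- volume
    have h1 : volume K1 = ENNReal.ofReal c := by
      rw [hK1, volume_pi_pi]
      have : ∀ i : Fin (k + 2), volume (if i = 0 then A else I) =
          if i = 0 then ENNReal.ofReal c else 1 := by
        intro i; split
        · exact hAvol
        · simp [hI, Real.volume_Icc]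
      simp only [this]
      rw [Finset.prod_ite_eq' Finset.univ (0 : Fin (k + 2)) (fun _ => ENNReal.ofReal c)]
      simp
    have h2 : volume K2 = 0 := by
      rw [hK2, volume_pi_pi]
      refine Finset.prod_eq_zero (Finset.mem_univ (1 : Fin (k + 2))) ?_
      simp
    refine le_antisymm ?_ ?_
    · calc volume (K1 ∪ K2) ≤ volume K1 + volume K2 := measure_union_le _ _
        _ = ENNReal.ofReal c := by rw [h1, h2, add_zero]
    · rw [← h1]; exact measure_mono Set.subset_union_left
end

section
/- For every integer m ≥ 1 and every real number c with 0 ≤ c < 1, there exists a sequence of odd integers k_j ≥ 3 (j = 1,2,…) such that the infinite product ∏_{j=1}^∞ (1 - k_j^{-m}) converges to c. -/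
open Filter

open scoped Classical in
noncomputable def sStep (m : ℕ) (c : ℝ) (P : ℝ) : ℕ :=
  if h : ∃ k : ℕ, Odd k ∧ 3 ≤ k ∧ c < P * (1 - ((k : ℝ) ^ m)⁻¹) then Nat.find h else 3

noncomputable def sP (m : ℕ) (c : ℝ) : ℕ → ℝ
  | 0 => 1
  | n + 1 => sP m c n * (1 - ((sStep m c (sP m c n) : ℝ) ^ m)⁻¹)

lemma sgood_of (m : ℕ) (hm : 1 ≤ m) (c P : ℝ) (hc0 : 0 ≤ c) (hP : c < P)
    (k : ℕ) (hk3 : 3 ≤ k) (hkP : P / (P - c) < (k : ℝ)) :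
    c < P * (1 - ((k : ℝ) ^ m)⁻¹) := by
  have hP0 : 0 < P := lt_of_le_of_lt hc0 hP
  have hPc : 0 < P - c := sub_pos.2 hP
  have hk1 : (1 : ℝ) ≤ (k : ℝ) := by exact_mod_cast le_trans (by norm_num) hk3
  have hk0 : (0 : ℝ) < (k : ℝ) := lt_of_lt_of_le one_pos hk1
  have h1 : (k : ℝ) ≤ (k : ℝ) ^ m := by
    calc (k : ℝ) = (k : ℝ) ^ 1 := (pow_one _).symm
    _ ≤ (k : ℝ) ^ m := pow_le_pow_right₀ hk1 hm
  have h2 : ((k : ℝ) ^ m)⁻¹ ≤ (k : ℝ)⁻¹ := by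
    apply inv_anti₀ hk0 h1
  have h3 : P / (k : ℝ) < P - c := by
    rw [div_lt_iff₀ hk0]
    have := (div_lt_iff₀ hPc).1 hkP
    nlinarith
  have h4 : c < P * (1 - (k : ℝ)⁻¹) := by
    have he : P * (1 - (k : ℝ)⁻¹) = P - P / k := by
      field_simp
    rw [he]; linarith
  calc c < P * (1 - (k : ℝ)⁻¹) := h4
  _ ≤ P * (1 - ((k : ℝ) ^ m)⁻¹) := by
    apply mul_le_mul_of_nonneg_left (by linarith) hP0.le

lemma sexists (m : ℕ) (hm : 1 ≤ m) (c P : ℝ) (hc0 : 0 ≤ c) (hP : c < P) :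
    ∃ k : ℕ, Odd k ∧ 3 ≤ k ∧ c < P * (1 - ((k : ℝ) ^ m)⁻¹) := by
  obtain ⟨n, hn⟩ := exists_nat_gt (P / (P - c))
  refine ⟨2 * n + 3, ⟨n + 1, by omega⟩, by omega, ?_⟩
  apply sgood_of m hm c P hc0 hP _ (by omega)
  have : (n : ℝ) ≤ ((2 * n + 3 : ℕ) : ℝ) := by push_cast; linarith [Nat.cast_nonneg (α := ℝ) n]
  linarith

open scoped Classical in
lemma sStep_spec (m : ℕ) (hm : 1 ≤ m) (c P : ℝ) (hc0 : 0 ≤ c) (hP : c < P) :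
    Odd (sStep m c P) ∧ 3 ≤ sStep m c P ∧
      c < P * (1 - ((sStep m c P : ℝ) ^ m)⁻¹) := by
  have h := sexists m hm c P hc0 hP
  rw [sStep, dif_pos h]
  exact Nat.find_spec h

open scoped Classical in
lemma sStep_le (m : ℕ) (c P : ℝ) (k : ℕ) (hk : Odd k ∧ 3 ≤ k ∧ c < P * (1 - ((k : ℝ) ^ m)⁻¹)) :
    sStep m c P ≤ k := by
  have h : ∃ k : ℕ, Odd k ∧ 3 ≤ k ∧ c < P * (1 - ((k : ℝ) ^ m)⁻¹) := ⟨k, hk⟩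
  rw [sStep, dif_pos h]
  exact Nat.find_min' h hk

lemma sP_gt (m : ℕ) (hm : 1 ≤ m) (c : ℝ) (hc0 : 0 ≤ c) (hc1 : c < 1) :
    ∀ n, c < sP m c n ∧ sP m c n ≤ 1 := by
  intro n
  induction n with
  | zero => exact ⟨hc1, le_refl 1⟩
  | succ n ih =>
    obtain ⟨h1, h2⟩ := ih
    obtain ⟨_, hk3, hlt⟩ := sStep_spec m hm c (sP m c n) hc0 h1
    refine ⟨hlt, ?_⟩
    have hkpos : (0 : ℝ) < (sStep m c (sP m c n) : ℝ) ^ m := by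
      have : (0 : ℝ) < (sStep m c (sP m c n) : ℝ) := by exact_mod_cast by omega
      positivity
    have : sP m c n * (1 - ((sStep m c (sP m c n) : ℝ) ^ m)⁻¹) ≤ sP m c n * 1 := by
      apply mul_le_mul_of_nonneg_left _ (le_of_lt (lt_of_le_of_lt hc0 h1))
      have : (0 : ℝ) < ((sStep m c (sP m c n) : ℝ) ^ m)⁻¹ := by positivity
      linarith
    rw [sP]
    calc sP m c n * (1 - ((sStep m c (sP m c n) : ℝ) ^ m)⁻¹) ≤ sP m c n * 1 := this
    _ = sP m c n := mul_one _
    _ ≤ 1 := h2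

lemma sP_anti (m : ℕ) (hm : 1 ≤ m) (c : ℝ) (hc0 : 0 ≤ c) (hc1 : c < 1) :
    Antitone (sP m c) := by
  apply antitone_nat_of_succ_le
  intro n
  obtain ⟨h1, h2⟩ := sP_gt m hm c hc0 hc1 n
  obtain ⟨_, hk3, _⟩ := sStep_spec m hm c (sP m c n) hc0 h1
  have hkpos : (0 : ℝ) < (sStep m c (sP m c n) : ℝ) ^ m := by
    have : (0 : ℝ) < (sStep m c (sP m c n) : ℝ) := by exact_mod_cast by omega
    positivity
  rw [sP]
  calc sP m c n * (1 - ((sStep m c (sP m c n) : ℝ) ^ m)⁻¹) ≤ sP m c n * 1 := by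
        apply mul_le_mul_of_nonneg_left _ (le_of_lt (lt_of_le_of_lt hc0 h1))
        have : (0 : ℝ) < ((sStep m c (sP m c n) : ℝ) ^ m)⁻¹ := by positivity
        linarith
  _ = sP m c n := mul_one _

lemma sP_small (m : ℕ) (hm : 1 ≤ m) (c : ℝ) (hc0 : 0 ≤ c) (hc1 : c < 1)
    (ε : ℝ) (hε : 0 < ε) : ∃ N, sP m c N < c + ε := by
  by_contra hcon
  push_neg at hcon
  -- uniform bound on sStep
  obtain ⟨n₀, hn₀⟩ := exists_nat_gt (1 / ε)
  set K : ℕ := 2 * n₀ + 3 with hK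
  have hK3 : 3 ≤ K := by omega
  have hKodd : Odd K := ⟨n₀ + 1, by omega⟩
  have hKbig : (1 : ℝ) / ε < (K : ℝ) := by
    have : (n₀ : ℝ) ≤ (K : ℝ) := by exact_mod_cast by omega
    linarith
  have hK0 : (0 : ℝ) < (K : ℝ) := by exact_mod_cast by omega
  have hKmpos : (0 : ℝ) < (K : ℝ) ^ m := by positivity
  set r : ℝ := 1 - ((K : ℝ) ^ m)⁻¹ with hr
  have hr1 : r < 1 := by
    have : (0 : ℝ) < ((K : ℝ) ^ m)⁻¹ := by positivity
    simp only [hr]; linarith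
  have hr0 : 0 ≤ r := by
    have hK1 : (1 : ℝ) ≤ (K : ℝ) ^ m := by
      apply one_le_pow₀ (by exact_mod_cast (by omega : 1 ≤ K))
    have : ((K : ℝ) ^ m)⁻¹ ≤ 1 := by
      rw [inv_le_one_iff₀]; right; exact hK1
    simp only [hr]; linarith
  -- each step factor is at most r
  have hstep : ∀ n, sP m c n ≤ r ^ n := by
    intro n
    induction n with
    | zero => simp [sP]
    | succ n ih =>
      obtain ⟨h1, h2⟩ := sP_gt m hm c hc0 hc1 n
      -- K is a witness at sP m c n
      have hwit : c < sP m c n * (1 - ((K : ℝ) ^ m)⁻¹) := by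
        apply sgood_of m hm c _ hc0 h1 _ hK3
        have hεle : ε ≤ sP m c n - c := by have := hcon n; linarith
        have hPc : 0 < sP m c n - c := lt_of_lt_of_le hε hεle
        have : sP m c n / (sP m c n - c) ≤ 1 / ε :=
          div_le_div₀ zero_le_one h2 hε hεle
        linarith
      have hle : sStep m c (sP m c n) ≤ K := sStep_le m c _ K ⟨hKodd, hK3, hwit⟩
      have hk3 : 3 ≤ sStep m c (sP m c n) := (sStep_spec m hm c _ hc0 h1).2.1
      have hkpos : (0 : ℝ) < (sStep m c (sP m c n) : ℝ) := by exact_mod_cast by omega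
      have hmono : (1 : ℝ) - ((sStep m c (sP m c n) : ℝ) ^ m)⁻¹ ≤ r := by
        simp only [hr]
        have h1' : (sStep m c (sP m c n) : ℝ) ^ m ≤ (K : ℝ) ^ m := by
          apply pow_le_pow_left₀ hkpos.le (by exact_mod_cast hle)
        have : ((K : ℝ) ^ m)⁻¹ ≤ ((sStep m c (sP m c n) : ℝ) ^ m)⁻¹ :=
          inv_anti₀ (by positivity) h1'
        linarith
      rw [sP, pow_succ]
      have hP0 : 0 ≤ sP m c n := le_trans hc0 h1.le
      calc sP m c n * (1 - ((sStep m c (sP m c n) : ℝ) ^ m)⁻¹)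
          ≤ sP m c n * r := mul_le_mul_of_nonneg_left hmono hP0
      _ ≤ r ^ n * r := mul_le_mul_of_nonneg_right ih hr0
  -- r ^ n → 0, contradiction
  have htend : Tendsto (fun n => r ^ n) atTop (nhds 0) :=
    tendsto_pow_atTop_nhds_zero_of_lt_one hr0 hr1
  have hpos : 0 < c + ε := by linarith
  obtain ⟨N, hN⟩ := (htend.eventually (gt_mem_nhds hpos)).exists
  have := hcon N
  have := hstep N
  linarith

/-- For every integer `m ≥ 1` and every real `c` with `0 ≤ c < 1`, there exists a sequence of
odd integers `k_j ≥ 3` such that the infinite product `∏_{j} (1 - k_j^{-m})` converges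
to `c`. -/
theorem sierpinski_measure_product (m : ℕ) (hm : 1 ≤ m) (c : ℝ) (hc0 : 0 ≤ c) (hc1 : c < 1) :
    ∃ k : ℕ → ℕ,
      (∀ j, Odd (k j) ∧ 3 ≤ k j) ∧
      Tendsto (fun N => ∏ j ∈ Finset.range N, (1 - ((k j : ℝ) ^ m)⁻¹)) atTop (nhds c) := by
  refine ⟨fun j => sStep m c (sP m c j), ?_, ?_⟩
  · intro j
    obtain ⟨h1, h2⟩ := sP_gt m hm c hc0 hc1 j
    obtain ⟨ho, h3, _⟩ := sStep_spec m hm c _ hc0 h1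
    exact ⟨ho, h3⟩
  · have hprod : ∀ N, ∏ j ∈ Finset.range N,
        (1 - ((sStep m c (sP m c j) : ℝ) ^ m)⁻¹) = sP m c N := by
      intro N
      induction N with
      | zero => simp [sP]
      | succ N ih => rw [Finset.prod_range_succ, ih, sP]
    simp only [hprod]
    rw [Metric.tendsto_atTop]
    intro ε hε
    obtain ⟨N, hN⟩ := sP_small m hm c hc0 hc1 ε hε
    refine ⟨N, fun n hn => ?_⟩
    have h1 := (sP_gt m hm c hc0 hc1 n).1
    have h2 : sP m c n ≤ sP m c N := sP_anti m hm c hc0 hc1 hn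
    rw [Real.dist_eq, abs_lt]
    constructor <;> linarith
end
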